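/- Let A₁ ∈ A[∂₁] and A₂ ∈ A[∂₂] be differential operators (in ∂₁ only and ∂₂ only, respectively), and H = ∂₁∂₂ + u. Then there exists a unique decomposition [A₁, A₂] = P∂₁ + Q∂₂ + a + R·H with P ∈ A[∂₁], Q ∈ A[∂₂], a ∈ A, and R ∈ A[∂₁, ∂₂]. -/
import Mathlib

open Finsupp

section Aux

variable {V R : Type*} [CommRing V] [Ring R]

noncomputable def NFh (ι : V →+* R) (d1 d2 : R) : ((ℕ × ℕ) →₀ V) →+ R :=
  Finsupp.liftAddHom fun p =>
    { toFun := fun c => ι c * d1 ^ p.1 * d2 ^ p.2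
      map_zero' := by simp
      map_add' := fun a b => by simp [add_mul] }

variable (ι : V →+* R) (d1 d2 : R)

lemma NFh_single (p : ℕ × ℕ) (c : V) :
    NFh ι d1 d2 (single p c) = ι c * d1 ^ p.1 * d2 ^ p.2 := by
  simp [NFh]

lemma NFh_apply (f : (ℕ × ℕ) →₀ V) :
    NFh ι d1 d2 f = f.sum fun p c => ι c * d1 ^ p.1 * d2 ^ p.2 := by
  rw [NFh, liftAddHom_apply]; rfl

lemma NFh_eq_sum (f : (ℕ × ℕ) →₀ V) :
    NFh ι d1 d2 f = ∑ p ∈ f.support, ι (f p) * d1 ^ p.1 * d2 ^ p.2 := by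
  rw [NFh_apply]; rfl

lemma mem_support_sum {α : Type*} {s : Finset α} {F : α → ((ℕ × ℕ) →₀ V)} {p : ℕ × ℕ}
    (hp : p ∈ (∑ q ∈ s, F q).support) : ∃ q ∈ s, p ∈ (F q).support := by
  classical
  by_contra h
  push_neg at h
  apply Finsupp.mem_support_iff.mp hp
  rw [Finset.sum_apply']
  exact Finset.sum_eq_zero fun q hq => Finsupp.notMem_support_iff.mp (h q hq)

section ops

lemma mon_shift (hdcomm : d1 * d2 = d2 * d1) (c : V) (x y a b : ℕ) :
    ι c * d1 ^ x * d2 ^ y * (d1 ^ a * d2 ^ b) = ι c * d1 ^ (x + a) * d2 ^ (y + b) := by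
  have h : d2 ^ y * d1 ^ a = d1 ^ a * d2 ^ y :=
    (Commute.pow_pow (hdcomm.symm : Commute d2 d1) y a).eq
  rw [pow_add, pow_add]
  simp only [mul_assoc]
  congr 2
  rw [← mul_assoc, h, mul_assoc]

lemma L_mul_pow (hdcomm : d1 * d2 = d2 * d1) (f : (ℕ × ℕ) →₀ V) (a b : ℕ) :
    NFh ι d1 d2 f * (d1 ^ a * d2 ^ b)
      = NFh ι d1 d2 (mapDomain (fun p => (p.1 + a, p.2 + b)) f) := by
  rw [NFh_apply, NFh_apply, Finsupp.sum_mul,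
    Finsupp.sum_mapDomain_index (by intro p; simp) (by intro p m₁ m₂; simp [add_mul])]
  exact Finsupp.sum_congr fun p _ => mon_shift ι d1 d2 hdcomm (f p) p.1 p.2 a b

lemma L_scale (v : V) (f : (ℕ × ℕ) →₀ V) :
    ι v * NFh ι d1 d2 f = NFh ι d1 d2 (mapRange (v * ·) (mul_zero v) f) := by
  rw [NFh_apply, NFh_apply, Finsupp.mul_sum,
    Finsupp.sum_mapRange_index (by intro p; simp)]
  refine Finsupp.sum_congr fun p _ => ?_
  rw [← mul_assoc, ← mul_assoc, ← map_mul]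

end ops

section deriv

variable (δ1 δ2 : V → V)

lemma L_d1_mul (hδ10 : δ1 0 = 0)
    (hleib1 : ∀ v : V, d1 * ι v = ι v * d1 + ι (δ1 v)) (f : (ℕ × ℕ) →₀ V) :
    d1 * NFh ι d1 d2 f
      = NFh ι d1 d2 (mapDomain (fun p => (p.1 + 1, p.2)) f + mapRange δ1 hδ10 f) := by
  rw [map_add, NFh_apply, NFh_apply, NFh_apply, Finsupp.mul_sum,
    Finsupp.sum_mapDomain_index (by intro p; simp) (by intro p m₁ m₂; simp [add_mul]),
    Finsupp.sum_mapRange_index (by intro p; simp), ← Finsupp.sum_add]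
  refine Finsupp.sum_congr fun p _ => ?_
  have h1 : d1 * (ι (f p) * d1 ^ p.1 * d2 ^ p.2)
      = (ι (f p) * d1 + ι (δ1 (f p))) * (d1 ^ p.1 * d2 ^ p.2) := by
    rw [← hleib1]; simp only [mul_assoc]
  rw [h1, add_mul]
  congr 1
  · rw [mul_assoc (ι (f p)), ← mul_assoc d1, ← pow_succ', ← mul_assoc]
  · rw [← mul_assoc]

lemma L_d2_mul (hδ20 : δ2 0 = 0)
    (hleib2 : ∀ v : V, d2 * ι v = ι v * d2 + ι (δ2 v))
    (hdcomm : d1 * d2 = d2 * d1) (f : (ℕ × ℕ) →₀ V) :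
    d2 * NFh ι d1 d2 f
      = NFh ι d1 d2 (mapDomain (fun p => (p.1, p.2 + 1)) f + mapRange δ2 hδ20 f) := by
  rw [map_add, NFh_apply, NFh_apply, NFh_apply, Finsupp.mul_sum,
    Finsupp.sum_mapDomain_index (by intro p; simp) (by intro p m₁ m₂; simp [add_mul]),
    Finsupp.sum_mapRange_index (by intro p; simp), ← Finsupp.sum_add]
  refine Finsupp.sum_congr fun p _ => ?_
  have hc : d2 * d1 ^ p.1 = d1 ^ p.1 * d2 :=
    ((Commute.pow_right (hdcomm.symm : Commute d2 d1) p.1)).eq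
  have h1 : d2 * (ι (f p) * d1 ^ p.1 * d2 ^ p.2)
      = (ι (f p) * d2 + ι (δ2 (f p))) * (d1 ^ p.1 * d2 ^ p.2) := by
    rw [← hleib2]; simp only [mul_assoc]
  rw [h1, add_mul]
  congr 1
  · rw [mul_assoc (ι (f p)), ← mul_assoc d2, hc, mul_assoc, ← pow_succ', ← mul_assoc]
  · rw [← mul_assoc]

lemma E_exp (hδ10 : δ1 0 = 0) (hδ20 : δ2 0 = 0)
    (hleib1 : ∀ v : V, d1 * ι v = ι v * d1 + ι (δ1 v))
    (hleib2 : ∀ v : V, d2 * ι v = ι v * d2 + ι (δ2 v))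
    (hdcomm : d1 * d2 = d2 * d1) : ∀ a b (c : V), ∃ g : (ℕ × ℕ) →₀ V,
    (∀ p ∈ g.support, p.1 ≤ a ∧ p.2 ≤ b) ∧
    d1 ^ a * d2 ^ b * ι c = NFh ι d1 d2 g := by
  classical
  have base : ∀ b (c : V), ∃ g : (ℕ × ℕ) →₀ V,
      (∀ p ∈ g.support, p.1 ≤ 0 ∧ p.2 ≤ b) ∧ d2 ^ b * ι c = NFh ι d1 d2 g := by
    intro b
    induction b with
    | zero =>
      intro c
      refine ⟨single (0, 0) c, ?_, ?_⟩
      · intro p hp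
        have := Finsupp.support_single_subset hp
        simp at this
        simp [this]
      · rw [NFh_single]; simp
    | succ b ih =>
      intro c
      obtain ⟨g, hg, he⟩ := ih c
      refine ⟨mapDomain (fun p => (p.1, p.2 + 1)) g + mapRange δ2 hδ20 g, ?_, ?_⟩
      · intro p hp
        rcases Finset.mem_union.mp (Finsupp.support_add hp) with h | h
        · obtain ⟨q, hq, rfl⟩ := Finset.mem_image.mp (Finsupp.mapDomain_support h)
          exact ⟨(hg q hq).1, Nat.succ_le_succ (hg q hq).2⟩
        · exact ⟨(hg p (Finsupp.support_mapRange h)).1,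
            le_trans (hg p (Finsupp.support_mapRange h)).2 (Nat.le_succ b)⟩
      · rw [pow_succ' d2 b, mul_assoc, he, L_d2_mul ι d1 d2 δ2 hδ20 hleib2 hdcomm g]
  intro a
  induction a with
  | zero =>
    intro b c
    obtain ⟨g, hg, he⟩ := base b c
    exact ⟨g, hg, by simpa using he⟩
  | succ a ih =>
    intro b c
    obtain ⟨g, hg, he⟩ := ih b c
    refine ⟨mapDomain (fun p => (p.1 + 1, p.2)) g + mapRange δ1 hδ10 g, ?_, ?_⟩
    · intro p hp
      rcases Finset.mem_union.mp (Finsupp.support_add hp) with h | h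
      · obtain ⟨q, hq, rfl⟩ := Finset.mem_image.mp (Finsupp.mapDomain_support h)
        exact ⟨Nat.succ_le_succ (hg q hq).1, (hg q hq).2⟩
      · exact ⟨le_trans (hg p (Finsupp.support_mapRange h)).1 (Nat.le_succ a),
          (hg p (Finsupp.support_mapRange h)).2⟩
    · rw [pow_succ' d1 a, mul_assoc, mul_assoc, ← mul_assoc (d1 ^ a), he,
        L_d1_mul ι d1 d2 δ1 hδ10 hleib1 g]

end deriv

section prod

variable (δ1 δ2 : V → V)
variable (hδ10 : δ1 0 = 0) (hδ20 : δ2 0 = 0)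
variable (hleib1 : ∀ v : V, d1 * ι v = ι v * d1 + ι (δ1 v))
variable (hleib2 : ∀ v : V, d2 * ι v = ι v * d2 + ι (δ2 v))
variable (hdcomm : d1 * d2 = d2 * d1)

lemma Lmul (hδ10 : δ1 0 = 0) (hδ20 : δ2 0 = 0)
    (hleib1 : ∀ v : V, d1 * ι v = ι v * d1 + ι (δ1 v))
    (hleib2 : ∀ v : V, d2 * ι v = ι v * d2 + ι (δ2 v))
    (hdcomm : d1 * d2 = d2 * d1) (f g : (ℕ × ℕ) →₀ V) :
    ∃ h : (ℕ × ℕ) →₀ V,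
      (∀ p ∈ h.support, ∃ q ∈ f.support, ∃ r ∈ g.support,
        p.1 ≤ q.1 + r.1 ∧ p.2 ≤ q.2 + r.2) ∧
      NFh ι d1 d2 f * NFh ι d1 d2 g = NFh ι d1 d2 h := by
  classical
  choose G hG1 hG2 using E_exp ι d1 d2 δ1 δ2 hδ10 hδ20 hleib1 hleib2 hdcomm
  refine ⟨∑ q ∈ f.support, ∑ r ∈ g.support,
      mapRange ((f q) * ·) (mul_zero _)
        (mapDomain (fun p => (p.1 + r.1, p.2 + r.2)) (G q.1 q.2 (g r))), ?_, ?_⟩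
  · intro p hp
    obtain ⟨q, hq, hp⟩ := mem_support_sum hp
    obtain ⟨r, hr, hp⟩ := mem_support_sum hp
    have hp2 := Finsupp.support_mapRange hp
    obtain ⟨s, hs, rfl⟩ := Finset.mem_image.mp (Finsupp.mapDomain_support hp2)
    exact ⟨q, hq, r, hr, Nat.add_le_add_right (hG1 q.1 q.2 (g r) s hs).1 _,
      Nat.add_le_add_right (hG1 q.1 q.2 (g r) s hs).2 _⟩
  · rw [map_sum, NFh_eq_sum ι d1 d2 f, Finset.sum_mul]
    refine Finset.sum_congr rfl fun q hq => ?_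
    rw [map_sum, NFh_eq_sum ι d1 d2 g, Finset.mul_sum]
    refine Finset.sum_congr rfl fun r hr => ?_
    have key : ι (f q) * d1 ^ q.1 * d2 ^ q.2 * (ι (g r) * d1 ^ r.1 * d2 ^ r.2)
        = ι (f q) * ((d1 ^ q.1 * d2 ^ q.2 * ι (g r)) * (d1 ^ r.1 * d2 ^ r.2)) := by
      simp only [mul_assoc]
    rw [key, hG2, L_mul_pow ι d1 d2 hdcomm, L_scale]

end prod

section closureNF

variable (δ1 δ2 : V → V)

/-- normal form for the full closure -/
lemma C12 (hδ10 : δ1 0 = 0) (hδ20 : δ2 0 = 0)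
    (hleib1 : ∀ v : V, d1 * ι v = ι v * d1 + ι (δ1 v))
    (hleib2 : ∀ v : V, d2 * ι v = ι v * d2 + ι (δ2 v))
    (hdcomm : d1 * d2 = d2 * d1) :
    ∀ x ∈ Subring.closure (Set.range ⇑ι ∪ {d1, d2}), ∃ f, x = NFh ι d1 d2 f := by
  intro x hx
  induction hx using Subring.closure_induction with
  | mem x hx =>
    rcases hx with ⟨c, rfl⟩ | hx
    · exact ⟨single (0, 0) c, by rw [NFh_single]; simp⟩
    · rcases hx with rfl | rfl
      · exact ⟨single (1, 0) 1, by rw [NFh_single]; simp⟩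
      · exact ⟨single (0, 1) 1, by rw [NFh_single]; simp⟩
  | zero => exact ⟨0, by simp⟩
  | one => exact ⟨single (0, 0) 1, by rw [NFh_single]; simp⟩
  | add x y hx hy ihx ihy =>
    obtain ⟨f, rfl⟩ := ihx; obtain ⟨g, rfl⟩ := ihy
    exact ⟨f + g, (map_add _ _ _).symm⟩
  | neg x hx ihx =>
    obtain ⟨f, rfl⟩ := ihx
    exact ⟨-f, (map_neg _ _).symm⟩
  | mul x y hx hy ihx ihy =>
    obtain ⟨f, rfl⟩ := ihx; obtain ⟨g, rfl⟩ := ihy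
    obtain ⟨h, _, hh⟩ := Lmul ι d1 d2 δ1 δ2 hδ10 hδ20 hleib1 hleib2 hdcomm f g
    exact ⟨h, hh⟩

/-- normal form for `A[∂₁]` -/
lemma C1 (hδ10 : δ1 0 = 0) (hδ20 : δ2 0 = 0)
    (hleib1 : ∀ v : V, d1 * ι v = ι v * d1 + ι (δ1 v))
    (hleib2 : ∀ v : V, d2 * ι v = ι v * d2 + ι (δ2 v))
    (hdcomm : d1 * d2 = d2 * d1) :
    ∀ x ∈ Subring.closure (Set.range ⇑ι ∪ {d1}),
      ∃ f, (∀ p ∈ f.support, p.2 = 0) ∧ x = NFh ι d1 d2 f := by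
  intro x hx
  induction hx using Subring.closure_induction with
  | mem x hx =>
    rcases hx with ⟨c, rfl⟩ | hx
    · refine ⟨single (0, 0) c, ?_, by rw [NFh_single]; simp⟩
      intro p hp; have := Finsupp.support_single_subset hp; simp at this; simp [this]
    · rcases hx with rfl
      refine ⟨single (1, 0) 1, ?_, by rw [NFh_single]; simp⟩
      intro p hp; have := Finsupp.support_single_subset hp; simp at this; simp [this]
  | zero => exact ⟨0, by simp, by simp⟩
  | one =>
    refine ⟨single (0, 0) 1, ?_, by rw [NFh_single]; simp⟩
    intro p hp; have := Finsupp.support_single_subset hp; simp at this; simp [this]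
  | add x y hx hy ihx ihy =>
    classical
    obtain ⟨f, hf, rfl⟩ := ihx; obtain ⟨g, hg, rfl⟩ := ihy
    refine ⟨f + g, ?_, (map_add _ _ _).symm⟩
    intro p hp
    rcases Finset.mem_union.mp (Finsupp.support_add hp) with h | h
    exacts [hf p h, hg p h]
  | neg x hx ihx =>
    obtain ⟨f, hf, rfl⟩ := ihx
    exact ⟨-f, fun p hp => hf p (by rwa [Finsupp.support_neg] at hp),
      (map_neg _ _).symm⟩
  | mul x y hx hy ihx ihy =>
    obtain ⟨f, hf, rfl⟩ := ihx; obtain ⟨g, hg, rfl⟩ := ihy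
    obtain ⟨h, hsupp, hh⟩ := Lmul ι d1 d2 δ1 δ2 hδ10 hδ20 hleib1 hleib2 hdcomm f g
    refine ⟨h, ?_, hh⟩
    intro p hp
    obtain ⟨q, hq, r, hr, _, h2⟩ := hsupp p hp
    have h3 := hf q hq; have h4 := hg r hr
    omega

/-- normal form for `A[∂₂]` -/
lemma C2 (hδ10 : δ1 0 = 0) (hδ20 : δ2 0 = 0)
    (hleib1 : ∀ v : V, d1 * ι v = ι v * d1 + ι (δ1 v))
    (hleib2 : ∀ v : V, d2 * ι v = ι v * d2 + ι (δ2 v))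
    (hdcomm : d1 * d2 = d2 * d1) :
    ∀ x ∈ Subring.closure (Set.range ⇑ι ∪ {d2}),
      ∃ f, (∀ p ∈ f.support, p.1 = 0) ∧ x = NFh ι d1 d2 f := by
  intro x hx
  induction hx using Subring.closure_induction with
  | mem x hx =>
    rcases hx with ⟨c, rfl⟩ | hx
    · refine ⟨single (0, 0) c, ?_, by rw [NFh_single]; simp⟩
      intro p hp; have := Finsupp.support_single_subset hp; simp at this; simp [this]
    · rcases hx with rfl
      refine ⟨single (0, 1) 1, ?_, by rw [NFh_single]; simp⟩
      intro p hp; have := Finsupp.support_single_subset hp; simp at this; simp [this]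
  | zero => exact ⟨0, by simp, by simp⟩
  | one =>
    refine ⟨single (0, 0) 1, ?_, by rw [NFh_single]; simp⟩
    intro p hp; have := Finsupp.support_single_subset hp; simp at this; simp [this]
  | add x y hx hy ihx ihy =>
    classical
    obtain ⟨f, hf, rfl⟩ := ihx; obtain ⟨g, hg, rfl⟩ := ihy
    refine ⟨f + g, ?_, (map_add _ _ _).symm⟩
    intro p hp
    rcases Finset.mem_union.mp (Finsupp.support_add hp) with h | h
    exacts [hf p h, hg p h]
  | neg x hx ihx =>
    obtain ⟨f, hf, rfl⟩ := ihx
    exact ⟨-f, fun p hp => hf p (by rwa [Finsupp.support_neg] at hp),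
      (map_neg _ _).symm⟩
  | mul x y hx hy ihx ihy =>
    obtain ⟨f, hf, rfl⟩ := ihx; obtain ⟨g, hg, rfl⟩ := ihy
    obtain ⟨h, hsupp, hh⟩ := Lmul ι d1 d2 δ1 δ2 hδ10 hδ20 hleib1 hleib2 hdcomm f g
    refine ⟨h, ?_, hh⟩
    intro p hp
    obtain ⟨q, hq, r, hr, h2, _⟩ := hsupp p hp
    have h3 := hf q hq; have h4 := hg r hr
    omega

section Dec

/-- the decomposition predicate -/
def Dec (u : V) (x : R) : Prop :=
  ∃ P Q A W : R,
    P ∈ Subring.closure (Set.range ⇑ι ∪ {d1}) ∧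
    Q ∈ Subring.closure (Set.range ⇑ι ∪ {d2}) ∧
    A ∈ Set.range ⇑ι ∧
    W ∈ Subring.closure (Set.range ⇑ι ∪ {d1, d2}) ∧
    x = P * d1 + Q * d2 + A + W * (d1 * d2 + ι u)

variable (u : V)

lemma Dec_zero : Dec ι d1 d2 u 0 :=
  ⟨0, 0, 0, 0, zero_mem _, zero_mem _, ⟨0, map_zero ι⟩, zero_mem _, by simp⟩

lemma Dec_add {x y : R} (hx : Dec ι d1 d2 u x) (hy : Dec ι d1 d2 u y) :
    Dec ι d1 d2 u (x + y) := by
  obtain ⟨P, Q, A, W, hP, hQ, ⟨a, rfl⟩, hW, rfl⟩ := hx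
  obtain ⟨P', Q', A', W', hP', hQ', ⟨a', rfl⟩, hW', rfl⟩ := hy
  refine ⟨P + P', Q + Q', ι (a + a'), W + W', add_mem hP hP', add_mem hQ hQ',
    ⟨a + a', rfl⟩, add_mem hW hW', ?_⟩
  rw [map_add]
  noncomm_ring

lemma Dec_neg {x : R} (hx : Dec ι d1 d2 u x) : Dec ι d1 d2 u (-x) := by
  obtain ⟨P, Q, A, W, hP, hQ, ⟨a, rfl⟩, hW, rfl⟩ := hx
  refine ⟨-P, -Q, ι (-a), -W, neg_mem hP, neg_mem hQ, ⟨-a, rfl⟩, neg_mem hW, ?_⟩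
  rw [map_neg]
  noncomm_ring

lemma Dec_sum {α : Type*} (s : Finset α) (F : α → R)
    (h : ∀ x ∈ s, Dec ι d1 d2 u (F x)) : Dec ι d1 d2 u (∑ x ∈ s, F x) :=
  Finset.sum_induction F (Dec ι d1 d2 u) (fun _ _ => Dec_add ι d1 d2 u)
    (Dec_zero ι d1 d2 u) h

lemma d1_mem_12 : d1 ∈ Subring.closure (Set.range ⇑ι ∪ {d1, d2}) :=
  Subring.subset_closure (Or.inr (Set.mem_insert d1 {d2}))

lemma d2_mem_12 : d2 ∈ Subring.closure (Set.range ⇑ι ∪ {d1, d2}) :=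
  Subring.subset_closure (Or.inr (Set.mem_insert_of_mem _ rfl))

lemma Dec_mono (hδ10 : δ1 0 = 0) (hδ20 : δ2 0 = 0)
    (hleib1 : ∀ v : V, d1 * ι v = ι v * d1 + ι (δ1 v))
    (hleib2 : ∀ v : V, d2 * ι v = ι v * d2 + ι (δ2 v))
    (hdcomm : d1 * d2 = d2 * d1) :
    ∀ (a b : ℕ) (c : V), Dec ι d1 d2 u (ι c * d1 ^ a * d2 ^ b) := by
  classical
  choose G hG1 hG2 using E_exp ι d1 d2 δ1 δ2 hδ10 hδ20 hleib1 hleib2 hdcomm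
  suffices key : ∀ n (a b : ℕ) (c : V), a + b = n → Dec ι d1 d2 u (ι c * d1 ^ a * d2 ^ b) by
    intro a b c; exact key (a + b) a b c rfl
  intro n
  induction n using Nat.strong_induction_on with
  | _ n IH =>
    intro a b c hab
    have hιc : ι c ∈ Subring.closure (Set.range ⇑ι ∪ {d1, d2}) :=
      Subring.subset_closure (Or.inl ⟨c, rfl⟩)
    match a, b with
    | 0, 0 =>
      exact ⟨0, 0, ι c, 0, zero_mem _, zero_mem _, ⟨c, rfl⟩, zero_mem _, by simp⟩
    | 0, b + 1 =>
      refine ⟨0, ι c * d2 ^ b, 0, 0, zero_mem _, ?_, ⟨0, map_zero ι⟩, zero_mem _, ?_⟩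
      · have hd2 : d2 ∈ Subring.closure (Set.range ⇑ι ∪ {d2}) :=
          Subring.subset_closure (by simp)
        have hc2 : ι c ∈ Subring.closure (Set.range ⇑ι ∪ {d2}) :=
          Subring.subset_closure (by simp)
        exact mul_mem hc2 (pow_mem hd2 b)
      · rw [pow_succ]; simp [mul_assoc]
    | a + 1, 0 =>
      refine ⟨ι c * d1 ^ a, 0, 0, 0, ?_, zero_mem _, ⟨0, map_zero ι⟩, zero_mem _, ?_⟩
      · have hd1 : d1 ∈ Subring.closure (Set.range ⇑ι ∪ {d1}) :=
          Subring.subset_closure (by simp)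
        have hc1 : ι c ∈ Subring.closure (Set.range ⇑ι ∪ {d1}) :=
          Subring.subset_closure (by simp)
        exact mul_mem hc1 (pow_mem hd1 a)
      · rw [pow_succ]; simp [mul_assoc]
    | a + 1, b + 1 =>
      have hX : ι c * d1 ^ a * d2 ^ b ∈ Subring.closure (Set.range ⇑ι ∪ {d1, d2}) :=
        mul_mem (mul_mem hιc (pow_mem (d1_mem_12 ι d1 d2) a))
          (pow_mem (d2_mem_12 ι d1 d2) b)
      -- the H-part
      have h1 : Dec ι d1 d2 u ((ι c * d1 ^ a * d2 ^ b) * (d1 * d2 + ι u)) :=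
        ⟨0, 0, 0, ι c * d1 ^ a * d2 ^ b, zero_mem _, zero_mem _, ⟨0, map_zero ι⟩, hX,
          by simp⟩
      -- the correction term
      have h2 : Dec ι d1 d2 u (ι c * d1 ^ a * d2 ^ b * ι u) := by
        have e1 : ι c * d1 ^ a * d2 ^ b * ι u
            = NFh ι d1 d2 (mapRange (c * ·) (mul_zero c) (G a b u)) := by
          rw [mul_assoc, mul_assoc, ← mul_assoc (d1 ^ a), hG2, L_scale]
        rw [e1, NFh_eq_sum]
        refine Dec_sum ι d1 d2 u _ _ fun p hp => ?_
        have hps := Finsupp.support_mapRange hp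
        have hb := hG1 a b u p hps
        exact IH (p.1 + p.2) (by omega) p.1 p.2 _ rfl
      have e2 : ι c * d1 ^ (a + 1) * d2 ^ (b + 1)
          = (ι c * d1 ^ a * d2 ^ b) * (d1 * d2 + ι u) + -(ι c * d1 ^ a * d2 ^ b * ι u) := by
        have hsh := mon_shift ι d1 d2 hdcomm c a b 1 1
        simp only [pow_one] at hsh
        rw [← hsh, mul_add]
        abel
      rw [e2]
      exact Dec_add ι d1 d2 u h1 (Dec_neg ι d1 d2 u h2)

lemma Dec_of_mem (hδ10 : δ1 0 = 0) (hδ20 : δ2 0 = 0)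
    (hleib1 : ∀ v : V, d1 * ι v = ι v * d1 + ι (δ1 v))
    (hleib2 : ∀ v : V, d2 * ι v = ι v * d2 + ι (δ2 v))
    (hdcomm : d1 * d2 = d2 * d1) {x : R}
    (hx : x ∈ Subring.closure (Set.range ⇑ι ∪ {d1, d2})) : Dec ι d1 d2 u x := by
  obtain ⟨f, rfl⟩ := C12 ι d1 d2 δ1 δ2 hδ10 hδ20 hleib1 hleib2 hdcomm x hx
  rw [NFh_eq_sum]
  exact Dec_sum ι d1 d2 u _ _ fun p _ =>
    Dec_mono ι d1 d2 δ1 δ2 u hδ10 hδ20 hleib1 hleib2 hdcomm p.1 p.2 _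

end Dec

section Zero

variable (δ1 δ2 : V → V)

lemma Zlem (hδ10 : δ1 0 = 0) (hδ20 : δ2 0 = 0)
    (hleib1 : ∀ v : V, d1 * ι v = ι v * d1 + ι (δ1 v))
    (hleib2 : ∀ v : V, d2 * ι v = ι v * d2 + ι (δ2 v))
    (hdcomm : d1 * d2 = d2 * d1)
    (hindep : ∀ f : (ℕ × ℕ) →₀ V,
      (f.sum fun p c => ι c * d1 ^ p.1 * d2 ^ p.2) = 0 → f = 0)
    (u : V) (P Q W : R) (b : V)
    (hP : P ∈ Subring.closure (Set.range ⇑ι ∪ {d1}))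
    (hQ : Q ∈ Subring.closure (Set.range ⇑ι ∪ {d2}))
    (hW : W ∈ Subring.closure (Set.range ⇑ι ∪ {d1, d2}))
    (heq : P * d1 + Q * d2 + ι b + W * (d1 * d2 + ι u) = 0) :
    P = 0 ∧ Q = 0 ∧ b = 0 ∧ W = 0 := by
  classical
  choose G hG1 hG2 using E_exp ι d1 d2 δ1 δ2 hδ10 hδ20 hleib1 hleib2 hdcomm
  obtain ⟨p, hp0, rfl⟩ := C1 ι d1 d2 δ1 δ2 hδ10 hδ20 hleib1 hleib2 hdcomm P hP
  obtain ⟨q, hq0, rfl⟩ := C2 ι d1 d2 δ1 δ2 hδ10 hδ20 hleib1 hleib2 hdcomm Q hQ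
  obtain ⟨r, rfl⟩ := C12 ι d1 d2 δ1 δ2 hδ10 hδ20 hleib1 hleib2 hdcomm W hW
  have hinj1 : Function.Injective (fun s : ℕ × ℕ => (s.1 + 1, s.2)) := by
    intro s t h; simp only [Prod.mk.injEq] at h; exact Prod.ext (by omega) h.2
  have hinj2 : Function.Injective (fun s : ℕ × ℕ => (s.1, s.2 + 1)) := by
    intro s t h; simp only [Prod.mk.injEq] at h; exact Prod.ext h.1 (by omega)
  have hinj11 : Function.Injective (fun s : ℕ × ℕ => (s.1 + 1, s.2 + 1)) := by
    intro s t h; simp only [Prod.mk.injEq] at h; exact Prod.ext (by omega) (by omega)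
  set F1 : (ℕ × ℕ) →₀ V := mapDomain (fun s => (s.1 + 1, s.2)) p with hF1def
  set F2 : (ℕ × ℕ) →₀ V := mapDomain (fun s => (s.1, s.2 + 1)) q with hF2def
  set F3 : (ℕ × ℕ) →₀ V := single (0, 0) b with hF3def
  set F4 : (ℕ × ℕ) →₀ V := mapDomain (fun s => (s.1 + 1, s.2 + 1)) r with hF4def
  set F5 : (ℕ × ℕ) →₀ V :=
    ∑ s ∈ r.support, mapRange ((r s) * ·) (mul_zero _) (G s.1 s.2 u) with hF5def
  have e1 : NFh ι d1 d2 p * d1 = NFh ι d1 d2 F1 := by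
    have h := L_mul_pow ι d1 d2 hdcomm p 1 0
    rw [hF1def]; simpa using h
  have e2 : NFh ι d1 d2 q * d2 = NFh ι d1 d2 F2 := by
    have h := L_mul_pow ι d1 d2 hdcomm q 0 1
    rw [hF2def]; simpa using h
  have e4 : NFh ι d1 d2 r * (d1 * d2) = NFh ι d1 d2 F4 := by
    have h := L_mul_pow ι d1 d2 hdcomm r 1 1
    rw [hF4def]; simpa using h
  have e5 : NFh ι d1 d2 r * ι u = NFh ι d1 d2 F5 := by
    rw [hF5def, map_sum, NFh_eq_sum ι d1 d2 r, Finset.sum_mul]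
    refine Finset.sum_congr rfl fun s hs => ?_
    rw [mul_assoc, mul_assoc, ← mul_assoc (d1 ^ s.1), hG2, L_scale]
  have key : NFh ι d1 d2 (F1 + F2 + F3 + F4 + F5) = 0 := by
    rw [map_add, map_add, map_add, map_add, ← e1, ← e2, hF3def, NFh_single, ← e4, ← e5]
    simp only [pow_zero, mul_one]
    rw [← heq]
    noncomm_ring
  have hF : F1 + F2 + F3 + F4 + F5 = 0 := by
    apply hindep
    rw [← NFh_apply]
    exact key
  -- first, `r = 0`
  have hr0 : r = 0 := by
    by_contra hr
    have hne : r.support.Nonempty := Finsupp.support_nonempty_iff.mpr hr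
    have hne1 : (r.support.image Prod.fst).Nonempty := hne.image _
    set i := (r.support.image Prod.fst).max' hne1 with hi
    have himax : ∀ s ∈ r.support, s.1 ≤ i := fun s hs =>
      Finset.le_max' _ _ (Finset.mem_image_of_mem _ hs)
    obtain ⟨s0, hs0, hs0i⟩ := Finset.mem_image.mp (Finset.max'_mem _ hne1)
    set T := r.support.filter (fun s => s.1 = i) with hT
    have hTne : T.Nonempty := ⟨s0, Finset.mem_filter.mpr ⟨hs0, hs0i⟩⟩
    have hne2 : (T.image Prod.snd).Nonempty := hTne.image _
    set j := (T.image Prod.snd).max' hne2 with hj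
    obtain ⟨s1, hs1, hs1j⟩ := Finset.mem_image.mp (Finset.max'_mem _ hne2)
    have hs1T := Finset.mem_filter.mp hs1
    have hij : (i, j) ∈ r.support := by
      have hs1e : s1 = (i, j) := Prod.ext hs1T.2 hs1j
      exact hs1e ▸ hs1T.1
    have hz := DFunLike.congr_fun hF (i + 1, j + 1)
    simp only [Finsupp.add_apply, Finsupp.coe_zero, Pi.zero_apply] at hz
    have hz1 : F1 (i + 1, j + 1) = 0 := by
      rw [hF1def]
      apply Finsupp.notMem_support_iff.mp
      intro hmem
      obtain ⟨s, hs, hx⟩ := Finset.mem_image.mp (Finsupp.mapDomain_support hmem)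
      have h0 := hp0 s hs
      simp only [Prod.mk.injEq] at hx
      omega
    have hz2 : F2 (i + 1, j + 1) = 0 := by
      rw [hF2def]
      apply Finsupp.notMem_support_iff.mp
      intro hmem
      obtain ⟨s, hs, hx⟩ := Finset.mem_image.mp (Finsupp.mapDomain_support hmem)
      have h0 := hq0 s hs
      simp only [Prod.mk.injEq] at hx
      omega
    have hz3 : F3 (i + 1, j + 1) = 0 := by
      rw [hF3def, Finsupp.single_apply,
        if_neg (fun h => Nat.succ_ne_zero i (congrArg Prod.fst h).symm)]
    have hz4 : F4 (i + 1, j + 1) = r (i, j) := by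
      rw [hF4def]; exact Finsupp.mapDomain_apply hinj11 r (i, j)
    have hz5 : F5 (i + 1, j + 1) = 0 := by
      rw [hF5def, Finset.sum_apply']
      refine Finset.sum_eq_zero fun s hs => ?_
      apply Finsupp.notMem_support_iff.mp
      intro hmem
      have h1 := hG1 s.1 s.2 u _ (Finsupp.support_mapRange hmem)
      have h1a : i + 1 ≤ s.1 := h1.1
      have h2 := himax s hs
      omega
    rw [hz1, hz2, hz3, hz4, hz5] at hz
    simp only [zero_add, add_zero] at hz
    exact Finsupp.mem_support_iff.mp hij hz
  rw [hF1def, hF2def, hF3def, hF4def, hF5def, hr0] at hF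
  simp only [Finsupp.mapDomain_zero, Finsupp.support_zero, Finset.sum_empty,
    add_zero] at hF
  -- now extract `p`, `q`, `b`
  have hp' : p = 0 := by
    ext z
    by_cases hz2 : z.2 = 0
    · have hz := DFunLike.congr_fun hF (z.1 + 1, 0)
      simp only [Finsupp.add_apply, Finsupp.coe_zero, Pi.zero_apply] at hz
      have h1 : (mapDomain (fun s : ℕ × ℕ => (s.1 + 1, s.2)) p) (z.1 + 1, 0)
          = p (z.1, 0) := Finsupp.mapDomain_apply hinj1 p (z.1, 0)
      have h2 : (mapDomain (fun s : ℕ × ℕ => (s.1, s.2 + 1)) q) (z.1 + 1, 0) = 0 := by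
        apply Finsupp.notMem_support_iff.mp
        intro hmem
        obtain ⟨s, hs, hx⟩ := Finset.mem_image.mp (Finsupp.mapDomain_support hmem)
        simp only [Prod.mk.injEq] at hx
        omega
      have h3 : (single ((0 : ℕ), (0 : ℕ)) b) (z.1 + 1, 0) = 0 := by
        rw [Finsupp.single_apply,
          if_neg (fun h => Nat.succ_ne_zero z.1 (congrArg Prod.fst h).symm)]
      rw [h1, h2, h3] at hz
      have hze : z = (z.1, 0) := by rw [← hz2]
      rw [hze]
      simpa using hz
    · have : p z = 0 := Finsupp.notMem_support_iff.mp (fun h => hz2 (hp0 z h))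
      simp [this]
  have hq' : q = 0 := by
    ext z
    by_cases hz1 : z.1 = 0
    · have hz := DFunLike.congr_fun hF (0, z.2 + 1)
      simp only [Finsupp.add_apply, Finsupp.coe_zero, Pi.zero_apply] at hz
      have h1 : (mapDomain (fun s : ℕ × ℕ => (s.1 + 1, s.2)) p) (0, z.2 + 1) = 0 := by
        apply Finsupp.notMem_support_iff.mp
        intro hmem
        obtain ⟨s, hs, hx⟩ := Finset.mem_image.mp (Finsupp.mapDomain_support hmem)
        simp only [Prod.mk.injEq] at hx
        omega
      have h2 : (mapDomain (fun s : ℕ × ℕ => (s.1, s.2 + 1)) q) (0, z.2 + 1)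
          = q (0, z.2) := Finsupp.mapDomain_apply hinj2 q (0, z.2)
      have h3 : (single ((0 : ℕ), (0 : ℕ)) b) (0, z.2 + 1) = 0 := by
        rw [Finsupp.single_apply,
          if_neg (fun h => Nat.succ_ne_zero z.2 (congrArg Prod.snd h).symm)]
      rw [h1, h2, h3] at hz
      have hze : z = (0, z.2) := by rw [← hz1]
      rw [hze]
      simpa using hz
    · have : q z = 0 := Finsupp.notMem_support_iff.mp (fun h => hz1 (hq0 z h))
      simp [this]
  have hb : b = 0 := by
    have hz := DFunLike.congr_fun hF (0, 0)
    simp only [Finsupp.add_apply, Finsupp.coe_zero, Pi.zero_apply] at hz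
    have h1 : (mapDomain (fun s : ℕ × ℕ => (s.1 + 1, s.2)) p) (0, 0) = 0 := by
      apply Finsupp.notMem_support_iff.mp
      intro hmem
      obtain ⟨s, hs, hx⟩ := Finset.mem_image.mp (Finsupp.mapDomain_support hmem)
      simp only [Prod.mk.injEq] at hx
      omega
    have h2 : (mapDomain (fun s : ℕ × ℕ => (s.1, s.2 + 1)) q) (0, 0) = 0 := by
      apply Finsupp.notMem_support_iff.mp
      intro hmem
      obtain ⟨s, hs, hx⟩ := Finset.mem_image.mp (Finsupp.mapDomain_support hmem)
      simp only [Prod.mk.injEq] at hx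
      omega
    have h3 : (single ((0 : ℕ), (0 : ℕ)) b) (0, 0) = b := by
      simp
    rw [h1, h2, h3] at hz
    simpa using hz
  exact ⟨by rw [hp']; exact map_zero _, by rw [hq']; exact map_zero _, hb,
    by rw [hr0]; exact map_zero _⟩

end Zero


end closureNF


end Aux


/-- **Unique decomposition of `[A₁, A₂]`** (equation (9) of the paper).

`R` models the ring `A[∂₁, ∂₂]` of differential operators in two commuting derivations
over a commutative domain `A` (embedded by `ι`); the monomials `ι(c)·∂₁ⁱ∂₂ʲ` are linearly
independent.  For differential operators `A₁ ∈ A[∂₁]` and `A₂ ∈ A[∂₂]` and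
`H = ∂₁∂₂ + u`, there is a unique decomposition
`[A₁, A₂] = P∂₁ + Q∂₂ + a + R'·H` with `P ∈ A[∂₁]`, `Q ∈ A[∂₂]`, `a ∈ A` and
`R' ∈ A[∂₁, ∂₂]`. -/
theorem unique_decomposition_of_commutator
    {V R : Type*} [CommRing V] [IsDomain V] [Algebra ℂ V]
    [Ring R]
    (ι : V →+* R) (hι : Function.Injective ι)
    (d1 d2 : R)
    (δ1 δ2 : Derivation ℂ V V)
    (hleib1 : ∀ v : V, d1 * ι v = ι v * d1 + ι (δ1 v))
    (hleib2 : ∀ v : V, d2 * ι v = ι v * d2 + ι (δ2 v))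
    (hdcomm : d1 * d2 = d2 * d1)
    (hδcomm : ∀ v : V, δ1 (δ2 v) = δ2 (δ1 v))
    -- the monomials `v ∂₁ⁱ ∂₂ʲ` are linearly independent
    (hindep : ∀ f : (ℕ × ℕ) →₀ V,
      (f.sum fun p c => ι c * d1 ^ p.1 * d2 ^ p.2) = 0 → f = 0)
    (u : V) (A1 A2 : R)
    (hA1 : A1 ∈ Subring.closure (Set.range ⇑ι ∪ {d1}))
    (hA2 : A2 ∈ Subring.closure (Set.range ⇑ι ∪ {d2})) :
    ∃! x : R × R × R × R,
      x.1 ∈ Subring.closure (Set.range ⇑ι ∪ {d1}) ∧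
      x.2.1 ∈ Subring.closure (Set.range ⇑ι ∪ {d2}) ∧
      x.2.2.1 ∈ Set.range ⇑ι ∧
      x.2.2.2 ∈ Subring.closure (Set.range ⇑ι ∪ {d1, d2}) ∧
      A1 * A2 - A2 * A1
        = x.1 * d1 + x.2.1 * d2 + x.2.2.1 + x.2.2.2 * (d1 * d2 + ι u) := by
  have hδ10 : (⇑δ1 : V → V) 0 = 0 := map_zero δ1
  have hδ20 : (⇑δ2 : V → V) 0 = 0 := map_zero δ2
  have h1 : Subring.closure (Set.range ⇑ι ∪ {d1})
      ≤ Subring.closure (Set.range ⇑ι ∪ {d1, d2}) :=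
    Subring.closure_mono (Set.union_subset_union_right _ (by simp))
  have h2 : Subring.closure (Set.range ⇑ι ∪ {d2})
      ≤ Subring.closure (Set.range ⇑ι ∪ {d1, d2}) :=
    Subring.closure_mono (Set.union_subset_union_right _ (by simp))
  have hT : A1 * A2 - A2 * A1 ∈ Subring.closure (Set.range ⇑ι ∪ {d1, d2}) :=
    sub_mem (mul_mem (h1 hA1) (h2 hA2)) (mul_mem (h2 hA2) (h1 hA1))
  obtain ⟨P, Q, A, W, hP, hQ, hA, hW, heq⟩ :=
    Dec_of_mem ι d1 d2 ⇑δ1 ⇑δ2 u hδ10 hδ20 hleib1 hleib2 hdcomm hT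
  refine ⟨(P, Q, A, W), ⟨hP, hQ, hA, hW, heq⟩, ?_⟩
  rintro ⟨P', Q', A', W'⟩ ⟨hP', hQ', hA', hW', heq'⟩
  obtain ⟨a, rfl⟩ := hA
  obtain ⟨a', rfl⟩ := hA'
  have h0 : (P' - P) * d1 + (Q' - Q) * d2 + ι (a' - a)
      + (W' - W) * (d1 * d2 + ι u) = 0 := by
    rw [map_sub]
    have e : (P' - P) * d1 + (Q' - Q) * d2 + (ι a' - ι a)
        + (W' - W) * (d1 * d2 + ι u)
        = (P' * d1 + Q' * d2 + ι a' + W' * (d1 * d2 + ι u))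
          - (P * d1 + Q * d2 + ι a + W * (d1 * d2 + ι u)) := by
      noncomm_ring
    rw [e, ← heq', ← heq, sub_self]
  obtain ⟨hPe, hQe, hae, hWe⟩ :=
    Zlem ι d1 d2 ⇑δ1 ⇑δ2 hδ10 hδ20 hleib1 hleib2 hdcomm hindep u
      (P' - P) (Q' - Q) (W' - W) (a' - a)
      (sub_mem hP' hP) (sub_mem hQ' hQ) (sub_mem hW' hW) h0
  have : P' = P := sub_eq_zero.mp hPe
  have : Q' = Q := sub_eq_zero.mp hQe
  have : a' = a := sub_eq_zero.mp hae
  have : W' = W := sub_eq_zero.mp hWe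
  simp_all
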